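/- For every prime number p, the additive group of the p-adic numbers ℚ_p is self-dual: there exists an isomorphism of topological groups between ℚ_p and its Pontryagin dual, i.e. the group of continuous additive characters ℚ_p → S¹ equipped with the compact-open topology. Explicitly, the map sending y ∈ ℚ_p to the character x ↦ e^{2πi{yx}_p} (where {·}_p denotes the p-adic fractional part) is such an isomorphism. -/

import Mathlib

open Real Filter Topology

namespace PadicDual

variable {p : ℕ} [hp : Fact p.Prime]

lemma p_gt_one : (1:ℝ) < (p:ℝ) := by exact_mod_cast hp.out.one_lt
lemma p_pos : (0:ℝ) < (p:ℝ) := lt_trans one_pos p_gt_one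

lemma norm_mul_pow_le (z : ℚ_[p]) : ‖z * (p:ℚ_[p])^((-z.valuation).toNat)‖ ≤ 1 := by
  rcases eq_or_ne z 0 with rfl | hz
  · simp
  · rw [norm_mul, Padic.norm_eq_zpow_neg_valuation hz, Padic.norm_p_pow,
      ← zpow_add₀ (ne_of_gt p_pos), ← zpow_zero (p:ℝ)]
    apply zpow_le_zpow_right₀ (le_of_lt p_gt_one)
    have : -z.valuation ≤ ((-z.valuation).toNat : ℤ) := Int.self_le_toNat _
    omega

noncomputable def fracN (z : ℚ_[p]) : ℕ := (-z.valuation).toNat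

noncomputable def intPart (z : ℚ_[p]) : ℤ_[p] := ⟨z * (p:ℚ_[p])^(fracN z), norm_mul_pow_le z⟩

noncomputable def fracA (z : ℚ_[p]) : ℕ := (intPart z).appr (fracN z)

lemma fracA_lt (z : ℚ_[p]) : fracA z < p ^ fracN z := PadicInt.appr_lt _ _

lemma frac_spec (z : ℚ_[p]) : ‖z - (fracA z : ℚ_[p]) / (p:ℚ_[p])^(fracN z)‖ ≤ 1 := by
  have hp0 : ((p:ℚ_[p])^(fracN z)) ≠ 0 := by
    apply pow_ne_zero
    exact_mod_cast hp.out.ne_zero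
  have key : ‖z * (p:ℚ_[p])^(fracN z) - (fracA z : ℚ_[p])‖ ≤ (p:ℝ)^(-(fracN z:ℤ)) := by
    have h1 : (intPart z - ((fracA z : ℕ) : ℤ_[p])) ∈
        Ideal.span {(p : ℤ_[p]) ^ (fracN z)} := PadicInt.appr_spec _ _
    have h2 := ((intPart z - ((fracA z : ℕ) : ℤ_[p])).norm_le_pow_iff_mem_span_pow
      (fracN z)).mpr h1
    have h3 : z * (p:ℚ_[p])^(fracN z) - (fracA z : ℚ_[p])
        = ((intPart z - ((fracA z : ℕ) : ℤ_[p]) : ℤ_[p]) : ℚ_[p]) := by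
      rw [PadicInt.coe_sub, PadicInt.coe_natCast]; rfl
    rw [h3, PadicInt.padic_norm_e_of_padicInt]
    exact h2
  have heq : z - (fracA z : ℚ_[p]) / (p:ℚ_[p])^(fracN z)
      = (z * (p:ℚ_[p])^(fracN z) - (fracA z : ℚ_[p])) / (p:ℚ_[p])^(fracN z) := by
    field_simp
  rw [heq, norm_div, Padic.norm_p_pow, div_le_one (zpow_pos p_pos _)]
  exact key

lemma dvd_of_two_approx (z : ℚ_[p]) (a b N M : ℕ)
    (ha : ‖z - (a:ℚ_[p]) / (p:ℚ_[p])^N‖ ≤ 1) (hb : ‖z - (b:ℚ_[p]) / (p:ℚ_[p])^M‖ ≤ 1) :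
    ((p:ℤ)^(N+M)) ∣ ((a:ℤ) * (p:ℤ)^M - (b:ℤ) * (p:ℤ)^N) := by
  have hp0 : (p:ℚ_[p]) ≠ 0 := by exact_mod_cast hp.out.ne_zero
  have hcast : (((a:ℤ) * (p:ℤ)^M - (b:ℤ) * (p:ℤ)^N : ℤ) : ℚ_[p])
      = (p:ℚ_[p])^(N+M) * (((a:ℚ_[p])/(p:ℚ_[p])^N - z) + (z - (b:ℚ_[p])/(p:ℚ_[p])^M)) := by
    field_simp
    push_cast
    ring
  rw [← Padic.norm_int_le_pow_iff_dvd]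
  rw [hcast, norm_mul, Padic.norm_p_pow]
  calc (p:ℝ)^(-(N+M:ℕ):ℤ) * ‖((a:ℚ_[p])/(p:ℚ_[p])^N - z) + (z - (b:ℚ_[p])/(p:ℚ_[p])^M)‖
      ≤ (p:ℝ)^(-(N+M:ℕ):ℤ) * 1 := by
        apply mul_le_mul_of_nonneg_left ?_ (le_of_lt (zpow_pos p_pos _))
        refine le_trans (Padic.nonarchimedean _ _) (max_le ?_ hb)
        rwa [norm_sub_rev] at ha
    _ = (p:ℝ)^(-(N+M:ℕ):ℤ) := mul_one _
noncomputable def psi (z : ℚ_[p]) : Circle :=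
  Circle.exp (2 * π * ((fracA z : ℝ) / (p:ℝ)^(fracN z)))

lemma psi_char {z : ℚ_[p]} {a N : ℕ} (h : ‖z - (a:ℚ_[p]) / (p:ℚ_[p])^N‖ ≤ 1) :
    psi z = Circle.exp (2 * π * ((a:ℝ) / (p:ℝ)^N)) := by
  obtain ⟨m, hm⟩ := dvd_of_two_approx z (fracA z) a (fracN z) N (frac_spec z) h
  have hpN : ((p:ℝ)^N) ≠ 0 := ne_of_gt (pow_pos p_pos _)
  have hpF : ((p:ℝ)^(fracN z)) ≠ 0 := ne_of_gt (pow_pos p_pos _)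
  have hr : (fracA z : ℝ) / (p:ℝ)^(fracN z) = (a:ℝ) / (p:ℝ)^N + m := by
    have : ((fracA z : ℤ) * (p:ℤ)^N - (a:ℤ) * (p:ℤ)^(fracN z) : ℤ)
        = ((p:ℤ)^(fracN z + N) * m) := hm
    have hR : (fracA z : ℝ) * (p:ℝ)^N - (a:ℝ) * (p:ℝ)^(fracN z)
        = (p:ℝ)^(fracN z + N) * m := by exact_mod_cast congrArg (Int.cast : ℤ → ℝ) this
    field_simp
    rw [pow_add] at hR
    linarith [hR]
  rw [psi, hr, mul_add, Circle.exp_add]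
  have : Circle.exp (2 * π * (m:ℝ)) = 1 := by
    have := Circle.exp_int_mul_two_pi m
    rw [show ((m:ℝ) * (2*π)) = 2 * π * (m:ℝ) by ring] at this
    exact this
  rw [this, mul_one]

lemma psi_one_of_norm_le {z : ℚ_[p]} (h : ‖z‖ ≤ 1) : psi z = 1 := by
  have h0 : ‖z - ((0:ℕ):ℚ_[p]) / (p:ℚ_[p])^(0:ℕ)‖ ≤ 1 := by simpa using h
  rw [psi_char h0]
  simp

lemma psi_add (z w : ℚ_[p]) : psi (z + w) = psi z * psi w := by
  set a1 := fracA z; set n1 := fracN z; set a2 := fracA w; set n2 := fracN w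
  have hp0 : (p:ℚ_[p]) ≠ 0 := by exact_mod_cast hp.out.ne_zero
  have hkey : ‖(z + w) - ((a1 * p^n2 + a2 * p^n1 : ℕ):ℚ_[p]) / (p:ℚ_[p])^(n1+n2)‖ ≤ 1 := by
    have hsum : ((a1 * p^n2 + a2 * p^n1 : ℕ):ℚ_[p]) / (p:ℚ_[p])^(n1+n2)
        = (a1:ℚ_[p]) / (p:ℚ_[p])^n1 + (a2:ℚ_[p]) / (p:ℚ_[p])^n2 := by
      have h1 : (p:ℚ_[p])^n1 ≠ 0 := pow_ne_zero _ hp0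
      have h2 : (p:ℚ_[p])^n2 ≠ 0 := pow_ne_zero _ hp0
      rw [pow_add]
      field_simp
      push_cast; ring
    rw [hsum, show z + w - ((a1:ℚ_[p]) / (p:ℚ_[p])^n1 + (a2:ℚ_[p]) / (p:ℚ_[p])^n2)
        = (z - (a1:ℚ_[p]) / (p:ℚ_[p])^n1) + (w - (a2:ℚ_[p]) / (p:ℚ_[p])^n2) by ring]
    exact le_trans (Padic.nonarchimedean _ _) (max_le (frac_spec z) (frac_spec w))
  rw [psi_char hkey]
  have hr : ((a1 * p^n2 + a2 * p^n1 : ℕ):ℝ) / (p:ℝ)^(n1+n2)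
      = (a1:ℝ)/(p:ℝ)^n1 + (a2:ℝ)/(p:ℝ)^n2 := by
    have h1 : ((p:ℝ)^n1) ≠ 0 := ne_of_gt (pow_pos p_pos _)
    have h2 : ((p:ℝ)^n2) ≠ 0 := ne_of_gt (pow_pos p_pos _)
    rw [pow_add]
    field_simp
    push_cast; ring
  rw [hr, mul_add, Circle.exp_add]
  rfl

lemma psi_nsmul (c : ℕ) (z : ℚ_[p]) : psi ((c:ℚ_[p]) * z) = psi z ^ c := by
  induction c with
  | zero => simpa using psi_one_of_norm_le (by simp)
  | succ n ih =>
    rw [pow_succ, ← ih]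
    push_cast
    rw [add_mul, one_mul, psi_add]

lemma norm_le_one_of_psi_eq_one {z : ℚ_[p]} (h : psi z = 1) : ‖z‖ ≤ 1 := by
  rw [psi, Circle.exp_eq_one] at h
  obtain ⟨m, hm⟩ := h
  have hpi : (2*π) ≠ 0 := by positivity
  have hθ : (fracA z : ℝ) / (p:ℝ)^(fracN z) = m := by
    have : 2 * π * ((fracA z : ℝ) / (p:ℝ)^(fracN z)) = 2 * π * (m:ℝ) := by
      rw [hm]; ring
    exact mul_left_cancel₀ hpi this
  have h0 : (0:ℝ) ≤ (fracA z : ℝ) / (p:ℝ)^(fracN z) := by positivity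
  have h1 : (fracA z : ℝ) / (p:ℝ)^(fracN z) < 1 := by
    rw [div_lt_one (pow_pos p_pos _)]
    exact_mod_cast fracA_lt z
  have hm0 : (m:ℝ) = 0 := by
    have h0' : (0:ℝ) ≤ (m:ℝ) := hθ ▸ h0
    have h1' : (m:ℝ) < 1 := hθ ▸ h1
    have a' : (0:ℤ) ≤ m := by exact_mod_cast h0'
    have b' : m < 1 := by exact_mod_cast h1'
    have : m = 0 := by omega
    exact_mod_cast this
  have hA : fracA z = 0 := by
    have := hθ.trans hm0
    have hp' : ((p:ℝ)^(fracN z)) ≠ 0 := ne_of_gt (pow_pos p_pos _)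
    field_simp at this
    exact_mod_cast this
  have := frac_spec z
  rw [hA] at this
  simpa using this

lemma psi_continuous : Continuous (psi : ℚ_[p] → Circle) := by
  rw [continuous_iff_continuousAt]
  intro z
  have hev : (psi : ℚ_[p] → Circle) =ᶠ[nhds z] (fun _ => psi z) := by
    filter_upwards [Metric.ball_mem_nhds z one_pos] with w hw
    have h1 : psi w = psi z * psi (w - z) := by
      rw [← psi_add, add_sub_cancel]
    have h2 : psi (w - z) = 1 :=
      psi_one_of_norm_le (le_of_lt (show ‖w - z‖ < 1 by simpa [dist_eq_norm] using hw))
    rw [h1, h2, mul_one]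
  exact (continuousAt_const.congr hev.symm)

noncomputable def psiChar (y : ℚ_[p]) : PontryaginDual (Multiplicative ℚ_[p]) where
  toFun x := psi (y * x.toAdd)
  map_one' := psi_one_of_norm_le (by simp)
  map_mul' x w := by
    simp only [toAdd_mul, mul_add]
    exact psi_add _ _
  continuous_toFun := psi_continuous.comp (continuous_const.mul continuous_toAdd)

lemma psiChar_apply (y x : ℚ_[p]) : psiChar y (Multiplicative.ofAdd x) = psi (y * x) := rfl

lemma psiChar_add (y w : ℚ_[p]) : psiChar (y + w) = psiChar y * psiChar w := by
  apply DFunLike.ext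
  intro x
  show psi ((y + w) * x.toAdd) = psi (y * x.toAdd) * psi (w * x.toAdd)
  rw [add_mul, psi_add]

/-- the circle has no small subgroups -/
lemma circle_eq_one (u : Circle) (h : ∀ n : ℕ, 0 < ((u ^ n : Circle) : ℂ).re) : u = 1 := by
  by_contra hne
  have habs : ‖(u:ℂ)‖ = 1 := Circle.norm_coe u
  have hcos : ∀ n : ℕ, 0 < Real.cos (n * Complex.arg u) := by
    intro n
    have hu : (u:ℂ) = Complex.exp ((Complex.arg u : ℂ) * Complex.I) := by
      conv_lhs => rw [← Complex.norm_mul_exp_arg_mul_I (u:ℂ)]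
      rw [habs, Complex.ofReal_one, one_mul]
    have hpow : ((u ^ n : Circle) : ℂ) = Complex.exp (((n * Complex.arg u : ℝ) : ℂ) * Complex.I) := by
      have hcoe : ((u ^ n : Circle) : ℂ) = (u:ℂ)^n := by norm_cast
      rw [hcoe]
      conv_lhs => rw [hu]
      rw [← Complex.exp_nat_mul]
      congr 1
      push_cast
      ring
    have := h n
    rw [hpow, Complex.exp_ofReal_mul_I_re] at this
    exact this
  have harg : Complex.arg u ≠ 0 := by
    intro h0
    apply hne
    have : (u:ℂ) = 1 := by
      conv_lhs => rw [← Complex.norm_mul_exp_arg_mul_I (u:ℂ)]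
      rw [habs, h0, Complex.ofReal_one, one_mul, Complex.ofReal_zero, zero_mul,
        Complex.exp_zero]
    exact Subtype.ext this
  set t := |Complex.arg u| with ht
  have ht0 : 0 < t := abs_pos.mpr harg
  have htpi : t ≤ π := abs_le.mpr ⟨le_of_lt (Complex.neg_pi_lt_arg _), Complex.arg_le_pi _⟩
  set n := Nat.ceil ((π/2)/t) with hn
  have hn1 : π/2 ≤ n * t := by
    rw [← div_le_iff₀ ht0]
    exact Nat.le_ceil _
  have hn2 : (n:ℝ) * t ≤ π + π/2 := by
    have : (n:ℝ) < (π/2)/t + 1 := Nat.ceil_lt_add_one (by positivity)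
    have h2 : (n:ℝ) * t < π/2 + t := by
      calc (n:ℝ) * t < ((π/2)/t + 1) * t := by exact mul_lt_mul_of_pos_right this ht0
        _ = π/2 + t := by field_simp
    linarith
  have hcontr := Real.cos_nonpos_of_pi_div_two_le_of_le hn1 hn2
  rcases le_or_gt 0 (Complex.arg u) with hc | hc
  · have e : (n:ℝ) * Complex.arg u = n * t := by rw [ht, abs_of_nonneg hc]
    have hx := hcos n
    rw [e] at hx
    linarith
  · have e : (n:ℝ) * Complex.arg u = -((n:ℝ) * t) := by rw [ht, abs_of_neg hc]; ring
    have hx := hcos n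
    rw [e, Real.cos_neg] at hx
    linarith

lemma norm_le_of_psi (y : ℚ_[p]) (m : ℤ)
    (h : ∀ x : ℚ_[p], ‖x‖ ≤ (p:ℝ)^m → psi (y * x) = 1) : ‖y‖ ≤ (p:ℝ)^(-m) := by
  rcases eq_or_ne y 0 with rfl | hy
  · simp only [norm_zero]
    positivity
  by_contra hlt
  push_neg at hlt
  set v := y.valuation with hv
  have hnorm : ‖y‖ = (p:ℝ)^(-v) := Padic.norm_eq_zpow_neg_valuation hy
  have hvm : v < m := by
    rw [hnorm] at hlt
    have := (zpow_lt_zpow_iff_right₀ p_gt_one).mp hlt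
    omega
  set x : ℚ_[p] := (p:ℚ_[p])^(-v-1 : ℤ) with hx
  have hxnorm : ‖x‖ = (p:ℝ)^(v+1) := by
    rw [hx, Padic.norm_p_zpow]
    congr 1
    ring
  have hxle : ‖x‖ ≤ (p:ℝ)^m := by
    rw [hxnorm]
    exact zpow_le_zpow_right₀ (le_of_lt p_gt_one) (by omega)
  have h1 := h x hxle
  have h2 := norm_le_one_of_psi_eq_one h1
  rw [norm_mul, hnorm, hxnorm, ← zpow_add₀ (ne_of_gt p_pos)] at h2
  have : (-v) + (v + 1) = (1:ℤ) := by ring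
  rw [this] at h2
  simp only [zpow_one] at h2
  linarith [p_gt_one (p := p)]

lemma eq_zero_of_psi (y : ℚ_[p]) (h : ∀ x : ℚ_[p], psi (y * x) = 1) : y = 0 := by
  by_contra hy
  obtain ⟨k, hk⟩ := PadicInt.exists_pow_neg_lt p (norm_pos_iff.mpr hy)
  have := norm_le_of_psi y (k:ℤ) (fun x _ => h x)
  rw [show (-(k:ℤ)) = (-k : ℤ) by ring] at this
  linarith

lemma psiChar_injective : Function.Injective (psiChar : ℚ_[p] → _) := by
  intro y w hyw
  have hd : psiChar (y - w) = 1 := by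
    have h1 := psiChar_add (y - w) w
    rw [sub_add_cancel, hyw] at h1
    have h2 : psiChar (y - w) * psiChar w = 1 * psiChar w := by rw [one_mul]; exact h1.symm
    exact mul_right_cancel h2
  have : ∀ x : ℚ_[p], psi ((y - w) * x) = 1 := by
    intro x
    have := DFunLike.congr_fun hd (Multiplicative.ofAdd x)
    simpa [psiChar_apply] using this
  exact sub_eq_zero.mp (eq_zero_of_psi _ this)

lemma approx (z : ℚ_[p]) (j : ℕ) :
    ∃ c N : ℕ, ‖z - (c:ℚ_[p]) / (p:ℚ_[p])^N‖ ≤ (p:ℝ)^(-(j:ℤ)) := by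
  have hp0 : (p:ℚ_[p]) ≠ 0 := by exact_mod_cast hp.out.ne_zero
  set w := z / (p:ℚ_[p])^j with hw
  refine ⟨fracA w * p^j, fracN w, ?_⟩
  have heq : z - ((fracA w * p^j : ℕ):ℚ_[p]) / (p:ℚ_[p])^(fracN w)
      = (w - (fracA w : ℚ_[p]) / (p:ℚ_[p])^(fracN w)) * (p:ℚ_[p])^j := by
    rw [hw]
    push_cast
    field_simp
  rw [heq, norm_mul, Padic.norm_p_pow]
  calc ‖w - (fracA w : ℚ_[p]) / (p:ℚ_[p])^(fracN w)‖ * (p:ℝ)^(-(j:ℤ))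
      ≤ 1 * (p:ℝ)^(-(j:ℤ)) := mul_le_mul_of_nonneg_right (frac_spec w) (le_of_lt (zpow_pos p_pos _))
    _ = (p:ℝ)^(-(j:ℤ)) := one_mul _

lemma char_loc_triv (χ : PontryaginDual (Multiplicative ℚ_[p])) :
    ∃ k : ℕ, ∀ x : ℚ_[p], ‖x‖ ≤ (p:ℝ)^(-(k:ℤ)) → χ (Multiplicative.ofAdd x) = 1 := by
  set f : ℚ_[p] → Circle := fun x => χ (Multiplicative.ofAdd x) with hf
  have hfc : Continuous f := (map_continuous χ).comp continuous_ofAdd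
  have hf0 : f 0 = 1 := by
    show χ (Multiplicative.ofAdd 0) = 1
    rw [ofAdd_zero, map_one]
  have hU : {u : Circle | 0 < ((u:ℂ)).re} ∈ nhds (1 : Circle) := by
    have hre : Continuous fun u : Circle => ((u:ℂ)).re :=
      Complex.continuous_re.comp continuous_subtype_val
    refine (isOpen_lt continuous_const hre).mem_nhds ?_
    show (0:ℝ) < ((1:Circle):ℂ).re
    simp
  have hpre : f ⁻¹' {u | 0 < ((u:ℂ)).re} ∈ nhds (0:ℚ_[p]) := by
    apply hfc.continuousAt.preimage_mem_nhds
    rw [hf0]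
    exact hU
  obtain ⟨δ, hδ, hball⟩ := Metric.mem_nhds_iff.mp hpre
  obtain ⟨k, hk⟩ := PadicInt.exists_pow_neg_lt p hδ
  refine ⟨k, fun x hx => ?_⟩
  have hx' : ∀ n : ℕ, ((n:ℚ_[p]) * x) ∈ Metric.ball (0:ℚ_[p]) δ := by
    intro n
    rw [Metric.mem_ball, dist_zero_right, norm_mul]
    have h1 : ‖((n:ℤ):ℚ_[p])‖ ≤ 1 := Padic.norm_int_le_one _
    calc ‖(n:ℚ_[p])‖ * ‖x‖ ≤ 1 * ‖x‖ := by
          apply mul_le_mul_of_nonneg_right _ (norm_nonneg x)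
          exact_mod_cast h1
      _ = ‖x‖ := one_mul _
      _ ≤ (p:ℝ)^(-(k:ℤ)) := hx
      _ < δ := hk
  apply circle_eq_one
  intro n
  have hmem := hball (hx' n)
  have hpow : f x ^ n = f ((n:ℚ_[p]) * x) := by
    show (χ (Multiplicative.ofAdd x))^n = χ (Multiplicative.ofAdd ((n:ℚ_[p]) * x))
    rw [← map_pow, ← ofAdd_nsmul]
    congr 2
  rw [hpow]
  exact hmem

lemma root_exists (u : Circle) (M : ℕ) (hM : 0 < M) (h : u ^ M = 1) :
    ∃ b : ℕ, b < M ∧ (u:ℂ) = Complex.exp (2 * π * Complex.I * ((b:ℂ) / (M:ℂ))) := by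
  haveI : NeZero M := ⟨hM.ne'⟩
  have hprim := Complex.isPrimitiveRoot_exp M hM.ne'
  have hpow : ((u:ℂ))^M = 1 := by
    have := congrArg (fun v : Circle => (v:ℂ)) h
    push_cast at this
    exact_mod_cast this
  obtain ⟨b, hbM, hbe⟩ := hprim.eq_pow_of_pow_eq_one hpow
  refine ⟨b, hbM, ?_⟩
  rw [← hbe, ← Complex.exp_nat_mul]
  congr 1
  have hM0 : (M:ℂ) ≠ 0 := by exact_mod_cast hM.ne'
  field_simp

lemma psiChar_surjective : Function.Surjective (psiChar : ℚ_[p] → _) := by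
  intro χ
  obtain ⟨k, hk⟩ := char_loc_triv χ
  have hp0 : (p:ℚ_[p]) ≠ 0 := by exact_mod_cast hp.out.ne_zero
  have hpM : ∀ n : ℕ, 0 < p ^ (n + k) := fun n => pow_pos hp.out.pos _
  set u : ℕ → Circle := fun n => χ (Multiplicative.ofAdd ((p:ℚ_[p])^(-(n:ℤ)))) with hu
  have hupow : ∀ n : ℕ, (u n) ^ (p^(n+k)) = 1 := by
    intro n
    show (χ (Multiplicative.ofAdd ((p:ℚ_[p])^(-(n:ℤ)))))^(p^(n+k)) = 1
    rw [← map_pow, ← ofAdd_nsmul]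
    apply hk
    rw [nsmul_eq_mul]
    push_cast
    rw [← zpow_natCast (p:ℚ_[p]) (n+k), ← zpow_add₀ hp0, Padic.norm_p_zpow]
    apply le_of_eq
    congr 1
    push_cast
    ring
  choose b hblt hbe using fun n => root_exists (u n) (p^(n+k)) (hpM n) (hupow n)
  have h2πI : (2*(π:ℂ)*Complex.I) ≠ 0 := by
    simp [Real.pi_ne_zero, Complex.I_ne_zero, Complex.ofReal_ne_zero]
  have hdvd : ∀ n : ℕ, ((p:ℤ)^(n+k)) ∣ ((b (n+1) : ℤ) - (b n : ℤ)) := by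
    intro n
    have hPn : ((p^(n+k):ℕ):ℂ) ≠ 0 := by exact_mod_cast (hpM n).ne'
    have hpC : ((p:ℕ):ℂ) ≠ 0 := by exact_mod_cast hp.out.ne_zero
    have hrel : u n = (u (n+1)) ^ p := by
      show χ (Multiplicative.ofAdd ((p:ℚ_[p])^(-(n:ℤ))))
        = (χ (Multiplicative.ofAdd ((p:ℚ_[p])^(-(n+1:ℕ):ℤ))))^p
      have harith : (p:ℚ_[p]) * (p:ℚ_[p])^(-(n+1:ℕ):ℤ) = (p:ℚ_[p])^(-(n:ℤ)) := by
        rw [show (-(n+1:ℕ):ℤ) = -(n:ℤ) - 1 by push_cast; ring, zpow_sub₀ hp0, zpow_one]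
        field_simp
      rw [← map_pow, ← ofAdd_nsmul, nsmul_eq_mul, harith]
    have hexparg : ((u (n+1):ℂ))^p
        = Complex.exp (2*π*Complex.I*((b (n+1):ℂ)/((p^(n+k):ℕ):ℂ))) := by
      rw [hbe (n+1), ← Complex.exp_nat_mul]
      congr 1
      have : ((p^(n+1+k):ℕ):ℂ) = (p:ℂ) * ((p^(n+k):ℕ):ℂ) := by
        push_cast
        ring
      rw [this]
      field_simp
    have hC : Complex.exp (2*π*Complex.I*((b n:ℂ)/((p^(n+k):ℕ):ℂ)))
        = Complex.exp (2*π*Complex.I*((b (n+1):ℂ)/((p^(n+k):ℕ):ℂ))) := by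
      rw [← hbe n, ← hexparg]
      rw [hrel]
      rfl
    obtain ⟨m, hm⟩ := Complex.exp_eq_exp_iff_exists_int.mp hC
    have hm' : (2*(π:ℂ)*Complex.I) * ((b n:ℂ)/((p^(n+k):ℕ):ℂ))
        = (2*(π:ℂ)*Complex.I) * ((b (n+1):ℂ)/((p^(n+k):ℕ):ℂ) + m) := by
      rw [hm]
      ring
    have hfrac := mul_left_cancel₀ h2πI hm'
    have hC2 : (b n:ℂ) = (b (n+1):ℂ) + m * (p:ℂ)^(n+k) := by
      rw [show ((p^(n+k):ℕ):ℂ) = (p:ℂ)^(n+k) by push_cast; ring] at hfrac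
      field_simp at hfrac
      linear_combination hfrac
    have hZ : (b n:ℤ) = (b (n+1):ℤ) + m * (p:ℤ)^(n+k) := by
      exact_mod_cast hC2
    refine ⟨-m, ?_⟩
    linarith [hZ]
  set yseq : ℕ → ℚ_[p] := fun n => (b n : ℚ_[p]) / (p:ℚ_[p])^k with hyseq
  have hstep : ∀ n, ‖yseq (n+1) - yseq n‖ ≤ (p:ℝ)^(-(n:ℤ)) := by
    intro n
    have he : yseq (n+1) - yseq n = (((b (n+1):ℤ) - (b n:ℤ) : ℤ) : ℚ_[p]) / (p:ℚ_[p])^k := by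
      show (b (n+1) : ℚ_[p]) / (p:ℚ_[p])^k - (b n : ℚ_[p]) / (p:ℚ_[p])^k = _
      push_cast
      ring
    rw [he, norm_div, Padic.norm_p_pow, div_le_iff₀ (zpow_pos p_pos _)]
    have hnum : ‖(((b (n+1):ℤ) - (b n:ℤ) : ℤ) : ℚ_[p])‖ ≤ (p:ℝ)^(-(n+k:ℕ):ℤ) :=
      (Padic.norm_int_le_pow_iff_dvd _ _).mpr (hdvd n)
    refine le_trans hnum (le_of_eq ?_)
    rw [← zpow_add₀ (ne_of_gt p_pos)]
    congr 1
    push_cast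
    ring
  have hcauchy : CauchySeq yseq := by
    apply cauchySeq_of_le_geometric ((p:ℝ)⁻¹) 1 (inv_lt_one_of_one_lt₀ p_gt_one)
    intro n
    rw [dist_eq_norm, norm_sub_rev, one_mul, inv_pow, ← zpow_natCast (p:ℝ), ← zpow_neg]
    exact hstep n
  obtain ⟨y, hy⟩ := cauchySeq_tendsto_of_complete hcauchy
  have hdist2 : ∀ N M : ℕ, N ≤ M → ‖yseq M - yseq N‖ ≤ (p:ℝ)^(-(N:ℤ)) := by
    intro N M hNM
    induction M with
    | zero =>
      have hN0 : N = 0 := Nat.le_zero.mp hNM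
      subst hN0
      simp only [sub_self, norm_zero]
      positivity
    | succ M ih =>
      rcases Nat.lt_or_ge M.succ N with hlt | hge
      · omega
      rcases Nat.eq_or_lt_of_le hNM with heq | hlt2
      · rw [← heq]
        simp only [sub_self, norm_zero]
        positivity
      · have hNM' : N ≤ M := by omega
        have h3 : yseq (M+1) - yseq N = (yseq (M+1) - yseq M) + (yseq M - yseq N) := by ring
        rw [h3]
        refine le_trans (Padic.nonarchimedean _ _) (max_le ?_ (ih hNM'))
        refine le_trans (hstep M) (zpow_le_zpow_right₀ (le_of_lt p_gt_one) ?_)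
        omega
  have hyN : ∀ N : ℕ, ‖y - yseq N‖ ≤ (p:ℝ)^(-(N:ℤ)) := by
    intro N
    have hten : Tendsto (fun M => ‖yseq M - yseq N‖) atTop (nhds ‖y - yseq N‖) :=
      ((hy.sub tendsto_const_nhds).norm)
    apply le_of_tendsto hten
    filter_upwards [eventually_ge_atTop N] with M hM
    exact hdist2 N M hM
  have hynorm : ‖y‖ ≤ (p:ℝ)^(k:ℤ) := by
    apply le_of_tendsto hy.norm
    filter_upwards with n
    show ‖(b n : ℚ_[p]) / (p:ℚ_[p])^k‖ ≤ (p:ℝ)^(k:ℤ)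
    rw [norm_div, Padic.norm_p_pow, div_le_iff₀ (zpow_pos p_pos _)]
    rw [← zpow_add₀ (ne_of_gt p_pos)]
    have hb1 : ‖(b n : ℚ_[p])‖ ≤ 1 := by
      have := Padic.norm_int_le_one (p := p) (b n : ℤ)
      exact_mod_cast this
    refine le_trans hb1 (le_of_eq ?_)
    rw [show ((k:ℤ) + (-(k:ℤ))) = 0 by ring, zpow_zero]
  refine ⟨y, ?_⟩
  apply DFunLike.ext
  intro xm
  set x := xm.toAdd with hxdef
  have hxm : xm = Multiplicative.ofAdd x := rfl
  obtain ⟨c, N, hcN⟩ := approx x k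
  set z' := x - (c:ℚ_[p])/(p:ℚ_[p])^N with hz'
  have hL : psiChar y xm = psi (y * ((c:ℚ_[p])/(p:ℚ_[p])^N)) * psi (y * z') := by
    show psi (y * x) = _
    rw [← psi_add]
    congr 1
    rw [hz']
    ring
  have hz'1 : psi (y * z') = 1 := by
    apply psi_one_of_norm_le
    rw [norm_mul]
    calc ‖y‖ * ‖z'‖ ≤ (p:ℝ)^(k:ℤ) * (p:ℝ)^(-(k:ℤ)) :=
          mul_le_mul hynorm hcN (norm_nonneg _) (le_of_lt (zpow_pos p_pos _))
      _ = 1 := by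
          rw [← zpow_add₀ (ne_of_gt p_pos), show ((k:ℤ) + (-(k:ℤ))) = 0 by ring, zpow_zero]
  have hR : χ xm = χ (Multiplicative.ofAdd ((c:ℚ_[p])/(p:ℚ_[p])^N))
      * χ (Multiplicative.ofAdd z') := by
    rw [← map_mul]
    congr 1
    rw [hxm, ← ofAdd_add]
    congr 1
    rw [hz']
    ring
  have hz'2 : χ (Multiplicative.ofAdd z') = 1 := hk z' hcN
  have hdecomp : (c:ℚ_[p])/(p:ℚ_[p])^N = (c:ℚ_[p]) * (p:ℚ_[p])^(-(N:ℤ)) := by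
    rw [zpow_neg, zpow_natCast]
    ring
  have hmain : psi (y * ((c:ℚ_[p])/(p:ℚ_[p])^N))
      = χ (Multiplicative.ofAdd ((c:ℚ_[p])/(p:ℚ_[p])^N)) := by
    have hRHS : χ (Multiplicative.ofAdd ((c:ℚ_[p])/(p:ℚ_[p])^N)) = (u N)^c := by
      show _ = (χ (Multiplicative.ofAdd ((p:ℚ_[p])^(-(N:ℤ)))))^c
      rw [← map_pow, ← ofAdd_nsmul]
      congr 2
    have hLHS : psi (y * ((c:ℚ_[p])/(p:ℚ_[p])^N)) = (psi (y * (p:ℚ_[p])^(-(N:ℤ))))^c := by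
      rw [← psi_nsmul]
      congr 1
      rw [hdecomp]
      ring
    have happrox : ‖y * (p:ℚ_[p])^(-(N:ℤ)) - (b N : ℚ_[p])/(p:ℚ_[p])^(N+k)‖ ≤ 1 := by
      have he2 : y * (p:ℚ_[p])^(-(N:ℤ)) - (b N : ℚ_[p])/(p:ℚ_[p])^(N+k)
          = (y - yseq N) * (p:ℚ_[p])^(-(N:ℤ)) := by
        show _ = (y - (b N : ℚ_[p]) / (p:ℚ_[p])^k) * _
        rw [zpow_neg, zpow_natCast, pow_add]
        field_simp
      rw [he2, norm_mul, Padic.norm_p_zpow, neg_neg]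
      calc ‖y - yseq N‖ * (p:ℝ)^(N:ℤ) ≤ (p:ℝ)^(-(N:ℤ)) * (p:ℝ)^(N:ℤ) :=
            mul_le_mul_of_nonneg_right (hyN N) (le_of_lt (zpow_pos p_pos _))
        _ = 1 := by
            rw [← zpow_add₀ (ne_of_gt p_pos), show (-(N:ℤ) + (N:ℤ)) = 0 by ring, zpow_zero]
    have hval : psi (y * (p:ℚ_[p])^(-(N:ℤ))) = u N := by
      rw [psi_char happrox]
      apply Subtype.ext
      rw [Circle.coe_exp, hbe N]
      congr 1
      push_cast
      ring
    rw [hLHS, hval, hRHS]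
  rw [hL, hz'1, mul_one, hR, hz'2, mul_one, hmain]

lemma psiChar_zero : psiChar (0:ℚ_[p]) = 1 := by
  apply DFunLike.ext
  intro x
  show psi (0 * x.toAdd) = 1
  rw [zero_mul]
  exact psi_one_of_norm_le (by simp)

lemma psiChar_continuous :
    Continuous (psiChar : ℚ_[p] → PontryaginDual (Multiplicative ℚ_[p])) := by
  apply ContinuousMonoidHom.continuous_of_continuous_uncurry
  show Continuous fun q : ℚ_[p] × Multiplicative ℚ_[p] => psi (q.1 * q.2.toAdd)
  exact psi_continuous.comp (continuous_fst.mul (continuous_toAdd.comp continuous_snd))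

noncomputable def equivDual : ℚ_[p] ≃ PontryaginDual (Multiplicative ℚ_[p]) :=
  Equiv.ofBijective psiChar ⟨psiChar_injective, psiChar_surjective⟩

lemma equivDual_apply (y : ℚ_[p]) : equivDual y = psiChar y := rfl

lemma symm_zero : (equivDual (p:=p)).symm 1 = 0 := by
  rw [Equiv.symm_apply_eq]
  exact psiChar_zero.symm

lemma symm_continuousAt_one : ContinuousAt (equivDual (p:=p)).symm 1 := by
  rw [ContinuousAt, symm_zero, Metric.tendsto_nhds]
  intro ε hε
  obtain ⟨k, hk⟩ := PadicInt.exists_pow_neg_lt p hε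
  set K : Set (Multiplicative ℚ_[p]) :=
    Multiplicative.ofAdd '' (Metric.closedBall (0:ℚ_[p]) ((p:ℝ)^(k:ℤ))) with hKdef
  have hKc : IsCompact K := (isCompact_closedBall _ _).image continuous_ofAdd
  set U : Set Circle := {u : Circle | 0 < ((u:ℂ)).re} with hUdef
  have hUo : IsOpen U :=
    isOpen_lt continuous_const (Complex.continuous_re.comp continuous_subtype_val)
  set S : Set (PontryaginDual (Multiplicative ℚ_[p])) := {χ | Set.MapsTo χ K U} with hSdef
  have hSopen : IsOpen S := isOpen_induced (ContinuousMap.isOpen_setOf_mapsTo hKc hUo)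
  have h1S : (1 : PontryaginDual (Multiplicative ℚ_[p])) ∈ S := by
    intro x _
    show (0:ℝ) < (((1 : PontryaginDual (Multiplicative ℚ_[p])) x : Circle):ℂ).re
    have h1 : (1 : PontryaginDual (Multiplicative ℚ_[p])) x = 1 := rfl
    rw [h1]
    simp
  filter_upwards [hSopen.mem_nhds h1S] with χ hχ
  set y := (equivDual (p:=p)).symm χ with hy
  have hEy : psiChar y = χ := (equivDual (p:=p)).apply_symm_apply χ
  have hpsi1 : ∀ x : ℚ_[p], ‖x‖ ≤ (p:ℝ)^(k:ℤ) → psi (y * x) = 1 := by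
    intro x hx
    apply circle_eq_one
    intro n
    have hxn : Multiplicative.ofAdd ((n:ℚ_[p]) * x) ∈ K := by
      refine ⟨(n:ℚ_[p]) * x, ?_, rfl⟩
      rw [Metric.mem_closedBall, dist_zero_right, norm_mul]
      have h1 : ‖((n:ℤ):ℚ_[p])‖ ≤ 1 := Padic.norm_int_le_one _
      calc ‖(n:ℚ_[p])‖ * ‖x‖ ≤ 1 * ‖x‖ := by
            apply mul_le_mul_of_nonneg_right _ (norm_nonneg x)
            exact_mod_cast h1
        _ = ‖x‖ := one_mul _
        _ ≤ _ := hx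
    have hmem := hχ hxn
    have hpow : psi (y*x) ^ n = χ (Multiplicative.ofAdd ((n:ℚ_[p]) * x)) := by
      rw [← hEy, psiChar_apply, ← psi_nsmul]
      congr 1
      ring
    rw [hpow]
    exact hmem
  have hnorm := norm_le_of_psi y (k:ℤ) hpsi1
  rw [dist_zero_right]
  exact lt_of_le_of_lt hnorm hk

lemma symm_addhom (χ₁ χ₂ : PontryaginDual (Multiplicative ℚ_[p])) :
    (equivDual (p:=p)).symm (χ₁ * χ₂)
      = (equivDual (p:=p)).symm χ₁ + (equivDual (p:=p)).symm χ₂ := by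
  apply (equivDual (p:=p)).injective
  rw [Equiv.apply_symm_apply]
  show _ = psiChar _
  rw [psiChar_add]
  show χ₁ * χ₂ = (equivDual (p:=p)) _ * (equivDual (p:=p)) _
  rw [Equiv.apply_symm_apply, Equiv.apply_symm_apply]

lemma symm_continuous : Continuous (equivDual (p:=p)).symm := by
  let g : PontryaginDual (Multiplicative ℚ_[p]) →* Multiplicative ℚ_[p] :=
    { toFun := fun χ => Multiplicative.ofAdd ((equivDual (p:=p)).symm χ),
      map_one' := by show Multiplicative.ofAdd ((equivDual (p:=p)).symm 1) = 1; rw [symm_zero, ofAdd_zero],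
      map_mul' := fun a c => by
        show Multiplicative.ofAdd ((equivDual (p:=p)).symm (a * c)) = _
        rw [symm_addhom, ofAdd_add] }
  have hg : Continuous g := by
    apply continuous_of_continuousAt_one g
    exact (continuous_ofAdd.continuousAt).comp symm_continuousAt_one
  exact continuous_toAdd.comp hg

noncomputable def homeoDual : ℚ_[p] ≃ₜ PontryaginDual (Multiplicative ℚ_[p]) :=
  { toEquiv := equivDual, continuous_toFun := psiChar_continuous,
    continuous_invFun := symm_continuous }

end PadicDual

/-- For every prime `p`, the additive group `ℚ_p` is self-dual: there is an isomorphism of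
topological groups from `ℚ_p` onto its Pontryagin dual (continuous characters `ℚ_p → S¹`
with the compact-open topology), which moreover can be chosen so that `y` is sent to the
character `x ↦ e^{2 π i {y x}_p}`, where `{·}_p` is the `p`-adic fractional part: the unique
rational `a / p^n` with `0 ≤ a < p^n` differing from the argument by a `p`-adic integer. -/
theorem padic_self_dual (p : ℕ) [Fact p.Prime] :
    ∃ e : ℚ_[p] ≃ₜ PontryaginDual (Multiplicative ℚ_[p]),
      (∀ y z : ℚ_[p], e (y + z) = e y * e z) ∧
      ∀ y x : ℚ_[p], ∃ a n : ℕ, a < p ^ n ∧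
        ‖y * x - (((a : ℚ) / (p : ℚ) ^ n : ℚ) : ℚ_[p])‖ ≤ 1 ∧
        ((e y (Multiplicative.ofAdd x) : Circle) : ℂ) =
          Complex.exp (2 * Real.pi * Complex.I * ((a : ℂ) / (p : ℂ) ^ n)) := by
  refine ⟨PadicDual.homeoDual, fun y z => PadicDual.psiChar_add y z, fun y x => ?_⟩
  refine ⟨PadicDual.fracA (y*x), PadicDual.fracN (y*x), PadicDual.fracA_lt _, ?_, ?_⟩
  · have := PadicDual.frac_spec (y*x)
    have hcast : (((PadicDual.fracA (y*x) : ℚ) / (p : ℚ) ^ (PadicDual.fracN (y*x)) : ℚ) : ℚ_[p])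
        = (PadicDual.fracA (y*x) : ℚ_[p]) / (p:ℚ_[p])^(PadicDual.fracN (y*x)) := by
      push_cast
      ring
    rw [hcast]
    exact this
  · show ((PadicDual.psi (y * x) : Circle) : ℂ) = _
    rw [PadicDual.psi, Circle.coe_exp]
    congr 1
    push_cast
    ring
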